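/- Let 𝒢 be a GRN with associated PRN ℛ. A node τ ∈ V is a simple node of 𝒢 if and only if both (τ,R) and (τ,P) are simple nodes of ℛ. -/

import Mathlib

open List Relation

/- In the PRN on `V × Bool`, the node `(v, false)` is the mRNA node `v^R`
   and `(v, true)` is the protein node `v^P`. -/

/-- Arrow relation of the PRN associated to a GRN with arrow relation `E`:
arrows `(v,R) → (v,P)` for every `v`, and `(u,P) → (v,R)` whenever `E u v`. -/
def prnAdj {V : Type*} (E : V → V → Prop) : V × Bool → V × Bool → Prop :=
  fun a b =>
    (a.1 = b.1 ∧ a.2 = false ∧ b.2 = true) ∨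
    (E a.1 b.1 ∧ a.2 = true ∧ b.2 = false)

/-- The lift of a path `σ₁ → ⋯ → σ_m` in the GRN to the path
`(σ₁,R) → (σ₁,P) → ⋯ → (σ_m,R) → (σ_m,P)` in the PRN. -/
def liftPath {V : Type*} (l : List V) : List (V × Bool) :=
  l.flatMap fun v => [(v, false), (v, true)]

/-- A simple path: a nonempty directed path visiting each node at most once. -/
def IsSimplePath {V : Type*} (E : V → V → Prop) (l : List V) : Prop :=
  l ≠ [] ∧ l.Chain' E ∧ l.Nodup

/-- A simple path from `a` to `b`. -/
def IsSimplePathFrom {V : Type*} (E : V → V → Prop) (a b : V) (l : List V) : Prop :=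
  IsSimplePath E l ∧ l.head? = some a ∧ l.getLast? = some b

/-- A node is simple if it lies on some simple path from the input to the output. -/
def IsSimpleNode {V : Type*} (E : V → V → Prop) (ι o v : V) : Prop :=
  ∃ l, IsSimplePathFrom E ι o l ∧ v ∈ l

/-- A node is super-simple if it lies on every simple path from the input to the output. -/
def IsSuperSimpleNode {V : Type*} (E : V → V → Prop) (ι o v : V) : Prop :=
  ∀ l, IsSimplePathFrom E ι o l → v ∈ l

/-- A node is appendage if it lies on no simple path from the input to the output. -/
def IsAppendageNode {V : Type*} (E : V → V → Prop) (ι o v : V) : Prop :=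
  ¬ IsSimpleNode E ι o v

/-- An appendage path from `a` to `b`: a simple path from `a` to `b` each of whose
nodes, except possibly `a` and `b`, is an appendage node. -/
def IsAppendagePath {V : Type*} (E : V → V → Prop) (ι o a b : V) (l : List V) : Prop :=
  IsSimplePathFrom E a b l ∧ ∀ v ∈ l, v ≠ a → v ≠ b → IsAppendageNode E ι o v

/-- A directed cycle: a nonempty closed directed walk visiting each of its nodes
exactly once (a self-loop is a cycle of length one). -/
def IsCycle {V : Type*} (E : V → V → Prop) (c : List V) : Prop :=
  c ≠ [] ∧ c.Chain' E ∧ c.Nodup ∧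
    ∃ a b, c.head? = some a ∧ c.getLast? = some b ∧ E b a

/-- Arrow relation of the appendage subnetwork: the induced subgraph on appendage nodes. -/
def appendageAdj {V : Type*} (E : V → V → Prop) (ι o : V) : V → V → Prop :=
  fun a b => E a b ∧ IsAppendageNode E ι o a ∧ IsAppendageNode E ι o b

/-- Two appendage nodes are path-equivalent if each is reachable from the other by a
directed path lying entirely within the appendage subnetwork. -/
def PathEquiv {V : Type*} (E : V → V → Prop) (ι o a b : V) : Prop :=
  Relation.ReflTransGen (appendageAdj E ι o) a b ∧
  Relation.ReflTransGen (appendageAdj E ι o) b a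

/-- A node `x` is between `a` and `b` if some input-to-output simple path visits
`a`, `x`, `b` in that order. -/
def Between {V : Type*} (E : V → V → Prop) (ι o a x b : V) : Prop :=
  ∃ l, IsSimplePathFrom E ι o l ∧ [a, x, b].Sublist l


lemma liftPath_mem {V : Type*} (l : List V) (v : V) (b : Bool) :
    (v, b) ∈ liftPath l ↔ v ∈ l := by
  cases b <;> simp [liftPath, Prod.ext_iff]

lemma liftPath_nodup {V : Type*} (l : List V) : (liftPath l).Nodup ↔ l.Nodup := by
  induction l with
  | nil => simp [liftPath]
  | cons v t ih =>
    have h : liftPath (v :: t) = (v, false) :: (v, true) :: liftPath t := rfl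
    rw [h]
    simp [List.nodup_cons, liftPath_mem, ih]

lemma liftPath_head {V : Type*} (l : List V) :
    (liftPath l).head? = l.head?.map (fun v => (v, false)) := by
  cases l <;> rfl

lemma liftPath_getLast {V : Type*} :
    ∀ l : List V, (liftPath l).getLast? = l.getLast?.map (fun v => (v, true))
  | [] => rfl
  | [v] => rfl
  | v :: w :: t => by
      have ih : ((w, false) :: (w, true) :: liftPath t).getLast?
          = ((w :: t).getLast?).map (fun v => (v, true)) := liftPath_getLast (w :: t)
      show ((v, false) :: (v, true) :: (w, false) :: (w, true) :: liftPath t).getLast?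
          = ((v :: w :: t).getLast?).map (fun v => (v, true))
      simp only [List.getLast?_cons_cons] at ih ⊢
      exact ih

lemma liftPath_chain {V : Type*} (E : V → V → Prop) :
    ∀ l : List V, l.Chain' E → (liftPath l).Chain' (prnAdj E)
  | [], _ => by simp [liftPath, List.Chain']
  | [v], _ => by
      show List.Chain' _ [(v, false), (v, true)]
      refine List.isChain_cons_cons.mpr ⟨Or.inl ⟨rfl, rfl, rfl⟩, ?_⟩
      simp
  | v :: w :: t, h => by
      have h1 : E v w := (List.isChain_cons_cons.mp h).1
      have h2 := (List.isChain_cons_cons.mp h).2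
      have ih : List.Chain' (prnAdj E) ((w, false) :: (w, true) :: liftPath t) :=
        liftPath_chain E (w :: t) h2
      show List.Chain' (prnAdj E)
        ((v, false) :: (v, true) :: (w, false) :: (w, true) :: liftPath t)
      rw [List.Chain', List.isChain_cons_cons, List.isChain_cons_cons]
      exact ⟨Or.inl ⟨rfl, rfl, rfl⟩, Or.inr ⟨h1, rfl, rfl⟩, ih⟩

lemma chain_structure {V : Type*} (E : V → V → Prop) :
    ∀ (L : List (V × Bool)) (a b : V), L.Chain' (prnAdj E) →
      L.head? = some (a, false) → L.getLast? = some (b, true) →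
      ∃ l : List V, L = liftPath l ∧ l.Chain' E ∧ l.head? = some a ∧ l.getLast? = some b
  | [], a, b, _, h1, _ => by simp at h1
  | [x], a, b, _, h1, h2 => by
      simp at h1 h2
      rw [h1] at h2
      simp at h2
  | x :: y :: L, a, b, hc, h1, h2 => by
      have hx : x = (a, false) := by simpa using h1
      subst hx
      have hadj : prnAdj E (a, false) y := (List.isChain_cons_cons.mp hc).1
      have hc' := (List.isChain_cons_cons.mp hc).2
      have hy : y = (a, true) := by
        rcases hadj with ⟨e1, _, e2⟩ | ⟨_, e2, _⟩
        · exact Prod.ext e1.symm e2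
        · simp at e2
      subst hy
      rcases L with _ | ⟨z, L'⟩
      · have hb : (a : V) = b := by
          have : ((a, true) : V × Bool) = (b, true) := by simpa using h2
          exact congrArg Prod.fst this
        subst hb
        exact ⟨[a], rfl, by simp [List.Chain'], rfl, rfl⟩
      · have hadj2 : prnAdj E (a, true) z := (List.isChain_cons_cons.mp hc').1
        have hc'' := (List.isChain_cons_cons.mp hc').2
        obtain ⟨hE, hz⟩ : E a z.1 ∧ z.2 = false := by
          rcases hadj2 with ⟨_, e2, _⟩ | ⟨e1, _, e3⟩
          · simp at e2
          · exact ⟨e1, e3⟩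
        have hzeq : z = (z.1, false) := Prod.ext rfl hz
        have hlast : (z :: L').getLast? = some (b, true) := by
          rw [List.getLast?_cons_cons, List.getLast?_cons_cons] at h2
          exact h2
        obtain ⟨l', hL, hch', hh', hl'⟩ :=
          chain_structure E (z :: L') z.1 b hc'' (by rw [hzeq]; simp) hlast
        refine ⟨a :: l', ?_, ?_, rfl, ?_⟩
        · show ((a, false) :: (a, true) :: (z :: L') : List (V × Bool))
            = (a, false) :: (a, true) :: liftPath l'
          rw [hL]
        · refine List.isChain_cons.mpr ⟨?_, hch'⟩
          intro c hcmem
          rw [hh'] at hcmem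
          simp at hcmem
          exact hcmem ▸ hE
        · rcases l' with _ | ⟨w, t⟩
          · simp at hh'
          · rw [List.getLast?_cons_cons]
            rcases t with _ | ⟨u, t'⟩
            · simpa using hl'
            · rw [List.getLast?_cons_cons] at hl'
              exact hl'

/-- A node `τ` is a simple node of the GRN if and only if both
`(τ,R)` and `(τ,P)` are simple nodes of the PRN. -/
theorem stmt_4 {V : Type*} [Fintype V] (E : V → V → Prop) (ι o τ : V) :
    IsSimpleNode E ι o τ ↔
      (IsSimpleNode (prnAdj E) (ι, false) (o, true) (τ, false) ∧
       IsSimpleNode (prnAdj E) (ι, false) (o, true) (τ, true)) := by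
  constructor
  · rintro ⟨l, ⟨⟨hne, hch, hnd⟩, hh, hl⟩, hmem⟩
    have hprops : IsSimplePathFrom (prnAdj E) (ι, false) (o, true) (liftPath l) := by
      refine ⟨⟨?_, liftPath_chain E l hch, (liftPath_nodup l).mpr hnd⟩, ?_, ?_⟩
      · rcases l with _ | ⟨v, t⟩
        · exact absurd rfl hne
        · simp [liftPath]
      · rw [liftPath_head, hh]; rfl
      · rw [liftPath_getLast, hl]; rfl
    exact ⟨⟨liftPath l, hprops, (liftPath_mem l τ false).mpr hmem⟩,
           ⟨liftPath l, hprops, (liftPath_mem l τ true).mpr hmem⟩⟩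
  · rintro ⟨⟨L, ⟨⟨hne, hch, hnd⟩, hh, hl⟩, hmem⟩, -⟩
    obtain ⟨l, hL, hch', hh', hl'⟩ := chain_structure E L ι o hch hh hl
    subst hL
    refine ⟨l, ⟨⟨?_, hch', (liftPath_nodup l).mp hnd⟩, hh', hl'⟩,
      (liftPath_mem l τ false).mp hmem⟩
    intro h; rw [h] at hh'; simp at hh'
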